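/- Let N, d, k, r be positive integers with 2k ≤ N and r ≥ 2, and let rows : Fin r → (Fin N → Fin d) be a packing array PA(r, N, d, k): for every subset T ⊆ Fin N with |T| = k, the map i ↦ (rows i) restricted to T is injective. Let a : Fin r → ℂ with a_i ≠ 0 for all i and ∑_i |a_i|² = 1, and let ψ : (Fin N → Fin d) → ℂ be the state with ψ(rows i) = a_i for each i and ψ(x) = 0 for x not in the image of rows. Then ψ is not UDP by its (N − k)-deck: there exists a unit vector φ : (Fin N → Fin d) → ℂ such that ρ_S(φ) = ρ_S(ψ) for every subset S ⊆ Fin N with |S| = N − k, and yet φ ≠ c • ψ for every scalar c : ℂ. -/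

import Mathlib

open Finset

/-- Combine `x` defined on `S` with `z` defined on the complement of `S`
into a full assignment `Fin N → Fin d`. -/
def joinFun {N d : ℕ} (S : Finset (Fin N))
    (x : {i // i ∈ S} → Fin d) (z : {i // i ∉ S} → Fin d) : Fin N → Fin d :=
  fun i => if h : i ∈ S then x ⟨i, h⟩ else z ⟨i, h⟩

/-- The marginal (reduced density matrix) of the pure state `ψ` on the parties `S`. -/
noncomputable def marginal {N d : ℕ} (S : Finset (Fin N)) (ψ : (Fin N → Fin d) → ℂ)
    (x y : {i // i ∈ S} → Fin d) : ℂ :=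
  ∑ z : {i // i ∉ S} → Fin d,
    ψ (joinFun S x z) * (starRingEnd ℂ) (ψ (joinFun S y z))

/-- `ψ` is a unit vector. -/
def UnitVec {N d : ℕ} (ψ : (Fin N → Fin d) → ℂ) : Prop :=
  ∑ x, ‖ψ x‖ ^ 2 = 1

/-- `ψ` is genuinely multipartite entangled. -/
def GME {N d : ℕ} (ψ : (Fin N → Fin d) → ℂ) : Prop :=
  ∀ J : Finset (Fin N), J.Nonempty → J ≠ Finset.univ →
    ¬ ∃ (α : ({i // i ∈ J} → Fin d) → ℂ) (β : ({i // i ∉ J} → Fin d) → ℂ),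
      ∀ x z, ψ (joinFun J x z) = α x * β z

/-- `ψ` is uniquely determined by the family of marginals `𝓕` among pure states. -/
def UDP {N d : ℕ} (𝓕 : Finset (Finset (Fin N))) (ψ : (Fin N → Fin d) → ℂ) : Prop :=
  ∀ φ : (Fin N → Fin d) → ℂ, UnitVec φ →
    (∀ F ∈ 𝓕, marginal F φ = marginal F ψ) →
    ∃ c : ℂ, ‖c‖ = 1 ∧ φ = c • ψ

/-- `rows` is a packing array of strength `k`: in any `k` columns, every `k`-tuple
appears at most once. -/
def IsPackingArray {r N d : ℕ} (k : ℕ) (rows : Fin r → (Fin N → Fin d)) : Prop :=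
  ∀ T : Finset (Fin N), T.card = k →
    Function.Injective (fun i : Fin r => fun j : {x // x ∈ T} => rows i j.1)

/-- The state built from a packing array `PA(r, N, d, k)` with
nonzero coefficients is not UDP by its `(N - k)`-deck. -/
theorem packing_array_state_not_UDP (N d k r : ℕ)
    (hN : 0 < N) (hd : 0 < d) (hk : 0 < k) (hkN : 2 * k ≤ N) (hr : 2 ≤ r)
    (rows : Fin r → (Fin N → Fin d)) (hPA : IsPackingArray k rows)
    (a : Fin r → ℂ) (ha : ∀ i, a i ≠ 0) (hnorm : ∑ i, ‖a i‖ ^ 2 = 1)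
    (ψ : (Fin N → Fin d) → ℂ)
    (hψrows : ∀ i, ψ (rows i) = a i)
    (hψzero : ∀ x : Fin N → Fin d, (∀ i, x ≠ rows i) → ψ x = 0) :
    ∃ φ : (Fin N → Fin d) → ℂ, UnitVec φ ∧
      (∀ S : Finset (Fin N), S.card = N - k → marginal S φ = marginal S ψ) ∧
      ∀ c : ℂ, φ ≠ c • ψ := by
  have hkle : k ≤ N := by omega
  set i0 : Fin r := ⟨0, by omega⟩ with hi0
  set i1 : Fin r := ⟨1, by omega⟩ with hi1
  -- rows is injective
  obtain ⟨T0, -, hT0⟩ := Finset.exists_subset_card_eq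
    (show k ≤ (Finset.univ : Finset (Fin N)).card by simpa using hkle)
  have hrowsinj : Function.Injective rows := by
    intro i j hij
    exact hPA T0 hT0 (funext fun w => by simp [hij])
  have hsupp : ∀ x, ψ x ≠ 0 → ∃ i, x = rows i := by
    intro x hx
    by_contra h
    push_neg at h
    exact hx (hψzero x h)
  set φ : (Fin N → Fin d) → ℂ := fun x => if x = rows i0 then -ψ x else ψ x with hφ
  have hφabs : ∀ x, ‖φ x‖ = ‖ψ x‖ := by
    intro x
    by_cases h : x = rows i0 <;> simp [hφ, h]
  refine ⟨φ, ?_, ?_, ?_⟩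
  · -- unit vector
    unfold UnitVec
    have h1 : ∑ x, ‖φ x‖ ^ 2 = ∑ x, ‖ψ x‖ ^ 2 := by
      exact Finset.sum_congr rfl (fun x _ => by rw [hφabs])
    have h2 : ∑ x, ‖ψ x‖ ^ 2
        = ∑ x ∈ Finset.univ.image rows, ‖ψ x‖ ^ 2 := by
      refine (Finset.sum_subset (Finset.subset_univ _) ?_).symm
      intro x _ hx
      have : ∀ i, x ≠ rows i := by
        intro i hxi
        exact hx (Finset.mem_image.mpr ⟨i, Finset.mem_univ i, hxi.symm⟩)
      rw [hψzero x this]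
      simp
    rw [h1, h2, Finset.sum_image (fun i _ j _ h => hrowsinj h)]
    simp only [hψrows]
    exact hnorm
  · -- marginals agree
    intro S hS
    have hT : Sᶜ.card = k := by
      rw [Finset.card_compl, hS, Fintype.card_fin]
      omega
    have key : ∀ u v : Fin N → Fin d, (∀ w, w ∉ S → u w = v w) →
        φ u * (starRingEnd ℂ) (φ v) = ψ u * (starRingEnd ℂ) (ψ v) := by
      intro u v huv
      by_cases hu : ψ u = 0
      · have hφu : φ u = 0 := by
          by_cases h : u = rows i0
          · exact absurd (by rw [← hψrows i0, ← h]; exact hu) (fun hh => ha i0 hh)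
          · simp [hφ, h, hu]
        simp [hφu, hu]
      by_cases hv : ψ v = 0
      · have hφv : φ v = 0 := by
          by_cases h : v = rows i0
          · exact absurd (by rw [← hψrows i0, ← h]; exact hv) (fun hh => ha i0 hh)
          · simp [hφ, h, hv]
        simp [hφv, hv]
      obtain ⟨i, hi⟩ := hsupp u hu
      obtain ⟨j, hj⟩ := hsupp v hv
      have hij : i = j := by
        refine hPA Sᶜ hT (funext fun w => ?_)
        have hw := huv w.1 (Finset.mem_compl.mp w.2)
        simp only
        rw [← hi, ← hj]
        exact hw
      have huv' : u = v := by rw [hi, hj, hij]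
      subst huv'
      by_cases h : u = rows i0
      · simp only [hφ, if_pos h, map_neg]
        ring
      · simp [hφ, h]
    unfold marginal
    funext x y
    refine Finset.sum_congr rfl (fun z _ => ?_)
    refine key _ _ (fun w hw => ?_)
    simp [joinFun, hw]
  · -- not proportional
    intro c hceq
    have hne : rows i1 ≠ rows i0 := by
      intro h
      have := hrowsinj h
      simp [hi0, hi1, Fin.ext_iff] at this
    have h0 : -a i0 = c * a i0 := by
      simpa [hφ, hψrows] using congrFun hceq (rows i0)
    have h1 : a i1 = c * a i1 := by
      simpa [hφ, hne, hψrows] using congrFun hceq (rows i1)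
    have hc1 : c = 1 := by
      have : c * a i1 = 1 * a i1 := by rw [one_mul]; exact h1.symm
      exact mul_right_cancel₀ (ha i1) this
    rw [hc1, one_mul] at h0
    exact ha i0 (by linear_combination (-1/2 : ℂ) * h0)
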